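/- Let N be an odd perfect number written in Euler form N = p^α · q_1^{2β_1} · … · q_{r-1}^{2β_{r-1}}, let ℓ be a prime and k a positive integer. If ℓ^k divides 2β_i + 1 for every i = 1, …, r−1 but ℓ^{5k} does not divide N, then ℓ ≠ q_i for all i = 1, …, r−1. -/

import Mathlib

open Finset

private lemma aux_pow5 : ∀ k : ℕ, 3 ≤ k → 5 * k < 3 ^ k := by
  intro k hk
  induction k with
  | zero => omega
  | succ n ih =>
    rcases Nat.lt_or_ge n 3 with h | h
    · interval_cases n
      · omega
      · omega
      · norm_num
    · have h1 := ih (by omega)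
      have h2 : 27 ≤ 3 ^ n := by
        calc (27:ℕ) = 3 ^ 3 := by norm_num
        _ ≤ 3 ^ n := Nat.pow_le_pow_right (by norm_num) h
      have h3 : 3 ^ (n + 1) = 3 ^ n * 3 := pow_succ 3 n
      omega

private lemma geom_dvd (r m n : ℕ) (h : m ∣ n) :
    (∑ t ∈ Finset.range m, r ^ t) ∣ ∑ t ∈ Finset.range n, r ^ t := by
  obtain ⟨c, rfl⟩ := h
  induction c with
  | zero => simp
  | succ c ih =>
    have key : ∑ t ∈ Finset.range (m * (c + 1)), r ^ t
        = (∑ t ∈ Finset.range (m * c), r ^ t)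
          + r ^ (m * c) * ∑ t ∈ Finset.range m, r ^ t := by
      have h1 : m * (c + 1) = m * c + m := by ring
      have hIco : ∑ i ∈ Finset.Ico (m * c) (m * c + m), r ^ i
          = r ^ (m * c) * ∑ t ∈ Finset.range m, r ^ t := by
        rw [Finset.sum_Ico_eq_sum_range, Finset.mul_sum]
        have h2 : m * c + m - m * c = m := by omega
        rw [h2]
        exact Finset.sum_congr rfl (fun t _ => by rw [pow_add])
      rw [h1, Finset.range_eq_Ico,
        ← Finset.sum_Ico_consecutive _ (Nat.zero_le (m * c)) (Nat.le_add_right (m * c) m),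
        hIco, ← Finset.range_eq_Ico]
    rw [key]
    exact dvd_add ih (dvd_mul_left _ _)

private lemma card3' {γ : Type*} [DecidableEq γ] {a b c : γ}
    (h1 : a ≠ b) (h2 : a ≠ c) (h3 : b ≠ c) :
    ({a, b, c} : Finset γ).card = 3 := by
  rw [Finset.card_insert_of_notMem (by simp [h1, h2]),
      Finset.card_insert_of_notMem (by simp [h3]),
      Finset.card_singleton]

private lemma card5' {γ : Type*} [DecidableEq γ] {a b c d e : γ}
    (h1 : a ≠ b) (h2 : a ≠ c) (h3 : a ≠ d) (h4 : a ≠ e)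
    (h5 : b ≠ c) (h6 : b ≠ d) (h7 : b ≠ e)
    (h8 : c ≠ d) (h9 : c ≠ e) (h10 : d ≠ e) :
    ({a, b, c, d, e} : Finset γ).card = 5 := by
  rw [Finset.card_insert_of_notMem (by simp [h1, h2, h3, h4]),
      Finset.card_insert_of_notMem (by simp [h5, h6, h7]),
      Finset.card_insert_of_notMem (by simp [h8, h9]),
      Finset.card_insert_of_notMem (by simp [h10]),
      Finset.card_singleton]

set_option maxHeartbeats 8000000 in
theorem ell_ne_qi
    (N p α s : ℕ) (q β : Fin s → ℕ)
    (hN : N = p ^ α * ∏ i, q i ^ (2 * β i))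
    (hodd : Odd N)
    (hperf : ArithmeticFunction.sigma 1 N = 2 * N)
    (hp : p.Prime) (hpodd : Odd p)
    (hq : ∀ i, (q i).Prime) (hqodd : ∀ i, Odd (q i))
    (hinj : Function.Injective q)
    (hpq : ∀ i, p ≠ q i)
    (hα4 : α % 4 = 1) (hp4 : p % 4 = 1)
    (hαpos : 0 < α) (hβpos : ∀ i, 0 < β i)
    (ℓ k : ℕ) (hℓ : ℓ.Prime) (hkpos : 0 < k)
    (hdvd : ∀ i, ℓ ^ k ∣ 2 * β i + 1)
    (hnd : ¬ ℓ ^ (5 * k) ∣ N) :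
    ∀ i, ℓ ≠ q i := by
  -- σ on prime powers is a geometric sum
  have hσpp : ∀ r e : ℕ, r.Prime →
      ArithmeticFunction.sigma 1 (r ^ e) = ∑ t ∈ Finset.range (e + 1), r ^ t := by
    intro r e hr
    rw [ArithmeticFunction.sigma_one_apply, Nat.sum_divisors_prime_pow hr]
  -- multiplicativity
  have hcopPQ : Nat.Coprime (p ^ α) (∏ j, q j ^ (2 * β j)) := by
    apply Nat.Coprime.pow_left
    apply Nat.Coprime.prod_right
    intro j _
    exact Nat.Coprime.pow_right _ ((Nat.coprime_primes hp (hq j)).mpr (hpq j))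
  have hpair : (↑(Finset.univ : Finset (Fin s)) : Set (Fin s)).Pairwise
      (Function.onFun Nat.Coprime fun j => q j ^ (2 * β j)) := by
    intro i _ j _ hij
    simp only [Function.onFun]
    exact Nat.Coprime.pow _ _ ((Nat.coprime_primes (hq i) (hq j)).mpr (fun h => hij (hinj h)))
  have hmult : ArithmeticFunction.sigma 1 N
      = ArithmeticFunction.sigma 1 (p ^ α)
        * ∏ j, ArithmeticFunction.sigma 1 (q j ^ (2 * β j)) := by
    rw [hN, (ArithmeticFunction.isMultiplicative_sigma (k := 1)).map_mul_of_coprime hcopPQ,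
      ArithmeticFunction.IsMultiplicative.map_prod _
        (ArithmeticFunction.isMultiplicative_sigma (k := 1)) Finset.univ hpair]
  have hσ2N : ArithmeticFunction.sigma 1 (p ^ α)
      * ∏ j, ArithmeticFunction.sigma 1 (q j ^ (2 * β j)) = 2 * N := by
    rw [← hmult]; exact hperf
  have hσqdvd : ∀ j, ArithmeticFunction.sigma 1 (q j ^ (2 * β j)) ∣ 2 * N := by
    intro j
    rw [← hσ2N]
    exact dvd_mul_of_dvd_right
      (Finset.dvd_prod_of_mem (fun j => ArithmeticFunction.sigma 1 (q j ^ (2 * β j)))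
        (Finset.mem_univ j)) _
  have hσpdvd : ArithmeticFunction.sigma 1 (p ^ α) ∣ 2 * N := by
    rw [← hσ2N]; exact dvd_mul_right _ _
  -- odd divisors of 2N divide N
  have hoddN : ∀ d : ℕ, d % 2 = 1 → d ∣ 2 * N → d ∣ N := by
    intro d hd h2
    have hco : Nat.Coprime d 2 := by
      rcases Nat.coprime_or_dvd_of_prime Nat.prime_two d with h | h
      · exact h.symm
      · exact absurd h (by omega)
    exact Nat.Coprime.dvd_of_dvd_mul_left hco h2
  -- classification of prime divisors of N
  have hclass : ∀ r : ℕ, r.Prime → r ∣ N → r = p ∨ ∃ j, q j = r := by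
    intro r hr hrN
    rw [hN] at hrN
    rcases (Nat.Prime.dvd_mul hr).mp hrN with h | h
    · exact Or.inl ((Nat.prime_dvd_prime_iff_eq hr hp).mp (Nat.Prime.dvd_of_dvd_pow hr h))
    · obtain ⟨j, _, hj⟩ := Prime.exists_mem_finset_dvd hr.prime h
      exact Or.inr ⟨j, ((Nat.prime_dvd_prime_iff_eq hr (hq j)).mp
        (Nat.Prime.dvd_of_dvd_pow hr hj)).symm⟩
  -- key divisibility through σ(q_j^{2β_j})
  have hkeyσ : ∀ (j : Fin s) (d m : ℕ), m ∣ 2 * β j + 1 →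
      d ∣ ∑ t ∈ Finset.range m, (q j) ^ t →
      d ∣ ArithmeticFunction.sigma 1 (q j ^ (2 * β j)) := by
    intro j d m hm hd
    rw [hσpp (q j) (2 * β j) (hq j)]
    exact hd.trans (geom_dvd (q j) m (2 * β j + 1) hm)
  have hkeyq : ∀ (j : Fin s) (d m : ℕ), m ∣ 2 * β j + 1 →
      d ∣ ∑ t ∈ Finset.range m, (q j) ^ t → d ∣ 2 * N :=
    fun j d m hm hd => (hkeyσ j d m hm hd).trans (hσqdvd j)
  -- key divisibility through σ(p^α)
  have hkeyp : ∀ d : ℕ, d ∣ p + 1 → d ∣ 2 * N := by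
    intro d hd
    have hα2 : (2 : ℕ) ∣ α + 1 := by omega
    have hsp : ∑ t ∈ Finset.range 2, p ^ t = p + 1 := by
      simp [Finset.sum_range_succ, Nat.add_comm]
    have h1 : d ∣ ∑ t ∈ Finset.range (α + 1), p ^ t := by
      refine Dvd.dvd.trans ?_ (geom_dvd p 2 (α + 1) hα2)
      rw [hsp]; exact hd
    refine Dvd.dvd.trans ?_ hσpdvd
    rw [hσpp p α hp]
    exact h1
  -- product of contributing factors
  have hmulN : ∀ (S : Finset (Fin s)) (c : ℕ),
      (∀ j ∈ S, c ∣ ArithmeticFunction.sigma 1 (q j ^ (2 * β j))) →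
      c ^ S.card ∣ 2 * N := by
    intro S c hc
    have h1 : c ^ S.card ∣ ∏ j ∈ S, ArithmeticFunction.sigma 1 (q j ^ (2 * β j)) := by
      rw [← Finset.prod_const]
      exact Finset.prod_dvd_prod_of_dvd _ _ hc
    have h2 : (∏ j ∈ S, ArithmeticFunction.sigma 1 (q j ^ (2 * β j)))
        ∣ ∏ j, ArithmeticFunction.sigma 1 (q j ^ (2 * β j)) :=
      Finset.prod_dvd_prod_of_subset _ _ _ (Finset.subset_univ S)
    have h3 : (∏ j, ArithmeticFunction.sigma 1 (q j ^ (2 * β j))) ∣ 2 * N := by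
      rw [← hσ2N]; exact dvd_mul_left _ _
    exact h1.trans (h2.trans h3)
  -- distinct values give distinct indices
  have hne : ∀ {i j : Fin s} {x y : ℕ}, q i = x → q j = y → x ≠ y → i ≠ j := by
    intro i j x y hx hy hxy h
    exact hxy (by rw [← hx, ← hy, h])
  intro i0 heq
  by_cases hbig : 5 * k ≤ 2 * β i0
  · apply hnd
    have h2 : ℓ ^ (2 * β i0) ∣ N := by
      rw [heq, hN]
      exact dvd_mul_of_dvd_right
        (Finset.dvd_prod_of_mem (fun j => q j ^ (2 * β j)) (Finset.mem_univ i0)) _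
    exact (pow_dvd_pow ℓ hbig).trans h2
  · push_neg at hbig
    have hl2 := hℓ.two_le
    have hlodd : ℓ % 2 = 1 := by rw [heq]; exact Nat.odd_iff.mp (hqodd i0)
    have hl3 : 3 ≤ ℓ := by omega
    have hdl := hdvd i0
    have hle : ℓ ^ k ≤ 2 * β i0 + 1 := Nat.le_of_dvd (by omega) hdl
    have h3k : 3 ^ k ≤ 5 * k := le_trans (Nat.pow_le_pow_left hl3 k) (by omega)
    have hk2 : k ≤ 2 := by
      by_contra hc
      have := aux_pow5 k (by omega)
      omega
    interval_cases k
    · -- k = 1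
      have hl5 : ℓ ≤ 5 := by
        have hpe : ℓ ^ 1 = ℓ := pow_one ℓ
        omega
      interval_cases ℓ
      · -- ℓ = 3 : case A
        have hq0 : q i0 = 3 := heq.symm
        have hd3 : ∀ j, (3 : ℕ) ∣ 2 * β j + 1 := by
          intro j; have := hdvd j; rwa [pow_one] at this
        have hβ1 : β i0 = 1 := by
          have h3 : (3 : ℕ) ∣ 2 * β i0 + 1 := hd3 i0
          omega
        -- budget machinery: N = 9 * M with 3 ∤ M
        set M := p ^ α * ∏ j ∈ Finset.univ.erase i0, q j ^ (2 * β j) with hMdef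
        have hNM : N = 9 * M := by
          rw [hN, hMdef, ← Finset.mul_prod_erase Finset.univ (fun j => q j ^ (2 * β j))
            (Finset.mem_univ i0)]
          rw [hq0, hβ1]
          ring
        have hne3M : ¬ (3 : ℕ) ∣ M := by
          intro h3
          rw [hMdef] at h3
          rcases (Nat.Prime.dvd_mul (by norm_num)).mp h3 with h | h
          · have h3p : (3 : ℕ) = p :=
              (Nat.prime_dvd_prime_iff_eq (by norm_num) hp).mp
                (Nat.Prime.dvd_of_dvd_pow (by norm_num) h)
            exact (hpq i0) (by rw [← h3p, hq0])
          · obtain ⟨j, hjm, hj⟩ := Prime.exists_mem_finset_dvd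
              ((by norm_num : Nat.Prime 3).prime) h
            have h3qj : (3 : ℕ) = q j :=
              (Nat.prime_dvd_prime_iff_eq (by norm_num) (hq j)).mp
                (Nat.Prime.dvd_of_dvd_pow (by norm_num) hj)
            have hij : i0 = j := hinj (hq0.trans h3qj)
            exact (Finset.mem_erase.mp hjm).1 hij.symm
        -- final contradiction builder from 3 contributor indices
        have finale : ∀ (a b c : Fin s), a ≠ b → a ≠ c → b ≠ c →
            (3 : ℕ) ∣ ArithmeticFunction.sigma 1 (q a ^ (2 * β a)) →
            (3 : ℕ) ∣ ArithmeticFunction.sigma 1 (q b ^ (2 * β b)) →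
            (3 : ℕ) ∣ ArithmeticFunction.sigma 1 (q c ^ (2 * β c)) → False := by
          intro a b c hab hac hbc hda hdb hdc
          have hcard : ({a, b, c} : Finset (Fin s)).card = 3 := card3' hab hac hbc
          have h27 : (3 : ℕ) ^ 3 ∣ 2 * N := by
            have := hmulN {a, b, c} 3 (by
              intro j hj
              simp only [Finset.mem_insert, Finset.mem_singleton] at hj
              rcases hj with rfl | rfl | rfl
              · exact hda
              · exact hdb
              · exact hdc)
            rwa [hcard] at this
          have h27' : (27 : ℕ) ∣ 2 * N := by norm_num at h27; exact h27
          obtain ⟨u, hu⟩ := h27'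
          rw [hNM] at hu
          exact hne3M (by omega)
        -- contributor fact: any index with value r ≡ 1 mod 3 contributes
        have contrib : ∀ (j : Fin s) (r : ℕ), q j = r →
            ((3 : ℕ) ∣ ∑ t ∈ Finset.range 3, r ^ t) →
            (3 : ℕ) ∣ ArithmeticFunction.sigma 1 (q j ^ (2 * β j)) := by
          intro j r hj hr
          exact hkeyσ j 3 3 (hd3 j) (by rw [hj]; exact hr)
        -- chain
        have h13 : (13 : ℕ) ∣ N :=
          hoddN 13 (by norm_num) (hkeyq i0 13 3 (hd3 i0)
            (by rw [hq0]; norm_num [Finset.sum_range_succ]))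
        rcases hclass 13 (by norm_num) h13 with h13p | ⟨a, ha⟩
        · -- 13 = p
          have h7 : (7 : ℕ) ∣ N :=
            hoddN 7 (by norm_num) (hkeyp 7 (by rw [← h13p]; norm_num))
          rcases hclass 7 (by norm_num) h7 with h7p | ⟨a, ha⟩
          · exact absurd (h13p.trans h7p.symm) (by norm_num)
          have h19 : (19 : ℕ) ∣ N :=
            hoddN 19 (by norm_num) (hkeyq a 19 3 (hd3 a)
              (by rw [ha]; norm_num [Finset.sum_range_succ]))
          rcases hclass 19 (by norm_num) h19 with h19p | ⟨b, hb⟩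
          · exact absurd (h13p.trans h19p.symm) (by norm_num)
          have h127 : (127 : ℕ) ∣ N :=
            hoddN 127 (by norm_num) (hkeyq b 127 3 (hd3 b)
              (by rw [hb]; norm_num [Finset.sum_range_succ]))
          rcases hclass 127 (by norm_num) h127 with h127p | ⟨c, hc⟩
          · exact absurd (h13p.trans h127p.symm) (by norm_num)
          exact finale a b c (hne ha hb (by norm_num)) (hne ha hc (by norm_num))
            (hne hb hc (by norm_num))
            (contrib a 7 ha (by norm_num [Finset.sum_range_succ]))
            (contrib b 19 hb (by norm_num [Finset.sum_range_succ]))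
            (contrib c 127 hc (by norm_num [Finset.sum_range_succ]))
        · -- q a = 13
          have h61 : (61 : ℕ) ∣ N :=
            hoddN 61 (by norm_num) (hkeyq a 61 3 (hd3 a)
              (by rw [ha]; norm_num [Finset.sum_range_succ]))
          rcases hclass 61 (by norm_num) h61 with h61p | ⟨b, hb⟩
          · -- 61 = p
            have h31 : (31 : ℕ) ∣ N :=
              hoddN 31 (by norm_num) (hkeyp 31 (by rw [← h61p]; norm_num))
            rcases hclass 31 (by norm_num) h31 with h31p | ⟨b, hb⟩
            · exact absurd (h61p.trans h31p.symm) (by norm_num)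
            have h331 : (331 : ℕ) ∣ N :=
              hoddN 331 (by norm_num) (hkeyq b 331 3 (hd3 b)
                (by rw [hb]; norm_num [Finset.sum_range_succ]))
            rcases hclass 331 (by norm_num) h331 with h331p | ⟨c, hc⟩
            · exact absurd (h61p.trans h331p.symm) (by norm_num)
            exact finale a b c (hne ha hb (by norm_num)) (hne ha hc (by norm_num))
              (hne hb hc (by norm_num))
              (contrib a 13 ha (by norm_num [Finset.sum_range_succ]))
              (contrib b 31 hb (by norm_num [Finset.sum_range_succ]))
              (contrib c 331 hc (by norm_num [Finset.sum_range_succ]))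
          · -- q b = 61
            have h97 : (97 : ℕ) ∣ N :=
              hoddN 97 (by norm_num) (hkeyq b 97 3 (hd3 b)
                (by rw [hb]; norm_num [Finset.sum_range_succ]))
            rcases hclass 97 (by norm_num) h97 with h97p | ⟨c, hc⟩
            · -- 97 = p
              have h7 : (7 : ℕ) ∣ N :=
                hoddN 7 (by norm_num) (hkeyp 7 (by rw [← h97p]; norm_num))
              rcases hclass 7 (by norm_num) h7 with h7p | ⟨c, hc⟩
              · exact absurd (h97p.trans h7p.symm) (by norm_num)
              exact finale a b c (hne ha hb (by norm_num)) (hne ha hc (by norm_num))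
                (hne hb hc (by norm_num))
                (contrib a 13 ha (by norm_num [Finset.sum_range_succ]))
                (contrib b 61 hb (by norm_num [Finset.sum_range_succ]))
                (contrib c 7 hc (by norm_num [Finset.sum_range_succ]))
            · exact finale a b c (hne ha hb (by norm_num)) (hne ha hc (by norm_num))
                (hne hb hc (by norm_num))
                (contrib a 13 ha (by norm_num [Finset.sum_range_succ]))
                (contrib b 61 hb (by norm_num [Finset.sum_range_succ]))
                (contrib c 97 hc (by norm_num [Finset.sum_range_succ]))
      · -- ℓ = 4 : not prime
        exact absurd hℓ (by norm_num)
      · -- ℓ = 5 : case B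
        have hq0 : q i0 = 5 := heq.symm
        have hd5 : ∀ j, (5 : ℕ) ∣ 2 * β j + 1 := by
          intro j; have := hdvd j; rwa [pow_one] at this
        have contrib : ∀ (j : Fin s) (r : ℕ), q j = r →
            ((5 : ℕ) ∣ ∑ t ∈ Finset.range 5, r ^ t) →
            (5 : ℕ) ∣ ArithmeticFunction.sigma 1 (q j ^ (2 * β j)) := by
          intro j r hj hr
          exact hkeyσ j 5 5 (hd5 j) (by rw [hj]; exact hr)
        have finale : ∀ (a b c d e : Fin s),
            a ≠ b → a ≠ c → a ≠ d → a ≠ e → b ≠ c → b ≠ d → b ≠ e →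
            c ≠ d → c ≠ e → d ≠ e →
            (5 : ℕ) ∣ ArithmeticFunction.sigma 1 (q a ^ (2 * β a)) →
            (5 : ℕ) ∣ ArithmeticFunction.sigma 1 (q b ^ (2 * β b)) →
            (5 : ℕ) ∣ ArithmeticFunction.sigma 1 (q c ^ (2 * β c)) →
            (5 : ℕ) ∣ ArithmeticFunction.sigma 1 (q d ^ (2 * β d)) →
            (5 : ℕ) ∣ ArithmeticFunction.sigma 1 (q e ^ (2 * β e)) → False := by
          intro a b c d e g1 g2 g3 g4 g5 g6 g7 g8 g9 g10 w1 w2 w3 w4 w5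
          have hcard : ({a, b, c, d, e} : Finset (Fin s)).card = 5 :=
            card5' g1 g2 g3 g4 g5 g6 g7 g8 g9 g10
          have h55 : (5 : ℕ) ^ 5 ∣ 2 * N := by
            have := hmulN {a, b, c, d, e} 5 (by
              intro j hj
              simp only [Finset.mem_insert, Finset.mem_singleton] at hj
              rcases hj with rfl | rfl | rfl | rfl | rfl
              · exact w1
              · exact w2
              · exact w3
              · exact w4
              · exact w5)
            rwa [hcard] at this
          have h5N : (5 : ℕ) ^ 5 ∣ N := hoddN _ (by norm_num) h55
          exact hnd (by norm_num; exact h5N)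
        have h11 : (11 : ℕ) ∣ N :=
          hoddN 11 (by norm_num) (hkeyq i0 11 5 (hd5 i0)
            (by rw [hq0]; norm_num [Finset.sum_range_succ]))
        rcases hclass 11 (by norm_num) h11 with h11p | ⟨a, ha⟩
        · rw [← h11p] at hp4; norm_num at hp4
        have h71 : (71 : ℕ) ∣ N :=
          hoddN 71 (by norm_num) (hkeyq i0 71 5 (hd5 i0)
            (by rw [hq0]; norm_num [Finset.sum_range_succ]))
        rcases hclass 71 (by norm_num) h71 with h71p | ⟨b, hb⟩
        · rw [← h71p] at hp4; norm_num at hp4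
        have h211 : (211 : ℕ) ∣ N :=
          hoddN 211 (by norm_num) (hkeyq b 211 5 (hd5 b)
            (by rw [hb]; norm_num [Finset.sum_range_succ]))
        rcases hclass 211 (by norm_num) h211 with h211p | ⟨c, hc⟩
        · rw [← h211p] at hp4; norm_num at hp4
        have h2221 : (2221 : ℕ) ∣ N :=
          hoddN 2221 (by norm_num) (hkeyq b 2221 5 (hd5 b)
            (by rw [hb]; norm_num [Finset.sum_range_succ]))
        have h3221 : (3221 : ℕ) ∣ N :=
          hoddN 3221 (by norm_num) (hkeyq a 3221 5 (hd5 a)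
            (by rw [ha]; norm_num [Finset.sum_range_succ]))
        have h1361 : (1361 : ℕ) ∣ N :=
          hoddN 1361 (by norm_num) (hkeyq c 1361 5 (hd5 c)
            (by rw [hc]; norm_num [Finset.sum_range_succ]))
        rcases hclass 2221 (by norm_num) h2221 with h2221p | ⟨d, hd⟩
        · -- 2221 = p
          rcases hclass 3221 (by norm_num) h3221 with h3221p | ⟨d, hd⟩
          · exact absurd (h2221p.trans h3221p.symm) (by norm_num)
          rcases hclass 1361 (by norm_num) h1361 with h1361p | ⟨e, he⟩
          · exact absurd (h2221p.trans h1361p.symm) (by norm_num)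
          exact finale a b c d e (hne ha hb (by norm_num)) (hne ha hc (by norm_num))
            (hne ha hd (by norm_num)) (hne ha he (by norm_num))
            (hne hb hc (by norm_num)) (hne hb hd (by norm_num)) (hne hb he (by norm_num))
            (hne hc hd (by norm_num)) (hne hc he (by norm_num)) (hne hd he (by norm_num))
            (contrib a 11 ha (by norm_num [Finset.sum_range_succ]))
            (contrib b 71 hb (by norm_num [Finset.sum_range_succ]))
            (contrib c 211 hc (by norm_num [Finset.sum_range_succ]))
            (contrib d 3221 hd (by norm_num [Finset.sum_range_succ]))
            (contrib e 1361 he (by norm_num [Finset.sum_range_succ]))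
        · -- q d = 2221
          rcases hclass 3221 (by norm_num) h3221 with h3221p | ⟨e, he⟩
          · -- 3221 = p
            rcases hclass 1361 (by norm_num) h1361 with h1361p | ⟨e, he⟩
            · exact absurd (h3221p.trans h1361p.symm) (by norm_num)
            exact finale a b c d e (hne ha hb (by norm_num)) (hne ha hc (by norm_num))
              (hne ha hd (by norm_num)) (hne ha he (by norm_num))
              (hne hb hc (by norm_num)) (hne hb hd (by norm_num)) (hne hb he (by norm_num))
              (hne hc hd (by norm_num)) (hne hc he (by norm_num)) (hne hd he (by norm_num))
              (contrib a 11 ha (by norm_num [Finset.sum_range_succ]))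
              (contrib b 71 hb (by norm_num [Finset.sum_range_succ]))
              (contrib c 211 hc (by norm_num [Finset.sum_range_succ]))
              (contrib d 2221 hd (by norm_num [Finset.sum_range_succ]))
              (contrib e 1361 he (by norm_num [Finset.sum_range_succ]))
          · exact finale a b c d e (hne ha hb (by norm_num)) (hne ha hc (by norm_num))
              (hne ha hd (by norm_num)) (hne ha he (by norm_num))
              (hne hb hc (by norm_num)) (hne hb hd (by norm_num)) (hne hb he (by norm_num))
              (hne hc hd (by norm_num)) (hne hc he (by norm_num)) (hne hd he (by norm_num))
              (contrib a 11 ha (by norm_num [Finset.sum_range_succ]))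
              (contrib b 71 hb (by norm_num [Finset.sum_range_succ]))
              (contrib c 211 hc (by norm_num [Finset.sum_range_succ]))
              (contrib d 2221 hd (by norm_num [Finset.sum_range_succ]))
              (contrib e 3221 he (by norm_num [Finset.sum_range_succ]))
    · -- k = 2
      have hl3' : ℓ ≤ 3 := by
        by_contra hc
        push_neg at hc
        have h16 : 16 ≤ ℓ ^ 2 := by
          calc (16 : ℕ) = 4 ^ 2 := by norm_num
          _ ≤ ℓ ^ 2 := Nat.pow_le_pow_left hc 2
        omega
      interval_cases ℓ
      -- ℓ = 3 : case C
      have hq0 : q i0 = 3 := heq.symm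
      have hd9 : ∀ j, (9 : ℕ) ∣ 2 * β j + 1 := by
        intro j; have := hdvd j; norm_num at this; exact this
      have contrib : ∀ (j : Fin s) (r : ℕ), q j = r →
          ((9 : ℕ) ∣ ∑ t ∈ Finset.range 9, r ^ t) →
          (9 : ℕ) ∣ ArithmeticFunction.sigma 1 (q j ^ (2 * β j)) := by
        intro j r hj hr
        exact hkeyσ j 9 9 (hd9 j) (by rw [hj]; exact hr)
      have finale : ∀ (a b c d e : Fin s),
          a ≠ b → a ≠ c → a ≠ d → a ≠ e → b ≠ c → b ≠ d → b ≠ e →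
          c ≠ d → c ≠ e → d ≠ e →
          (9 : ℕ) ∣ ArithmeticFunction.sigma 1 (q a ^ (2 * β a)) →
          (9 : ℕ) ∣ ArithmeticFunction.sigma 1 (q b ^ (2 * β b)) →
          (9 : ℕ) ∣ ArithmeticFunction.sigma 1 (q c ^ (2 * β c)) →
          (9 : ℕ) ∣ ArithmeticFunction.sigma 1 (q d ^ (2 * β d)) →
          (9 : ℕ) ∣ ArithmeticFunction.sigma 1 (q e ^ (2 * β e)) → False := by
        intro a b c d e g1 g2 g3 g4 g5 g6 g7 g8 g9 g10 w1 w2 w3 w4 w5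
        have hcard : ({a, b, c, d, e} : Finset (Fin s)).card = 5 :=
          card5' g1 g2 g3 g4 g5 g6 g7 g8 g9 g10
        have h95 : (9 : ℕ) ^ 5 ∣ 2 * N := by
          have := hmulN {a, b, c, d, e} 9 (by
            intro j hj
            simp only [Finset.mem_insert, Finset.mem_singleton] at hj
            rcases hj with rfl | rfl | rfl | rfl | rfl
            · exact w1
            · exact w2
            · exact w3
            · exact w4
            · exact w5)
          rwa [hcard] at this
        have h9N : (9 : ℕ) ^ 5 ∣ N := hoddN _ (by norm_num) h95
        apply hnd
        have he : (3 : ℕ) ^ (5 * 2) = 9 ^ 5 := by norm_num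
        rw [he]
        exact h9N
      have h13 : (13 : ℕ) ∣ N :=
        hoddN 13 (by norm_num) (hkeyq i0 13 9 (hd9 i0)
          (by rw [hq0]; norm_num [Finset.sum_range_succ]))
      have h757 : (757 : ℕ) ∣ N :=
        hoddN 757 (by norm_num) (hkeyq i0 757 9 (hd9 i0)
          (by rw [hq0]; norm_num [Finset.sum_range_succ]))
      rcases hclass 13 (by norm_num) h13 with h13p | ⟨a, ha⟩
      · -- 13 = p
        have h7 : (7 : ℕ) ∣ N :=
          hoddN 7 (by norm_num) (hkeyp 7 (by rw [← h13p]; norm_num))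
        rcases hclass 7 (by norm_num) h7 with h7p | ⟨a, ha⟩
        · exact absurd (h13p.trans h7p.symm) (by norm_num)
        have h19 : (19 : ℕ) ∣ N :=
          hoddN 19 (by norm_num) (hkeyq a 19 9 (hd9 a)
            (by rw [ha]; norm_num [Finset.sum_range_succ]))
        rcases hclass 19 (by norm_num) h19 with h19p | ⟨b, hb⟩
        · exact absurd (h13p.trans h19p.symm) (by norm_num)
        have h37 : (37 : ℕ) ∣ N :=
          hoddN 37 (by norm_num) (hkeyq a 37 9 (hd9 a)
            (by rw [ha]; norm_num [Finset.sum_range_succ]))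
        rcases hclass 37 (by norm_num) h37 with h37p | ⟨c, hc⟩
        · exact absurd (h13p.trans h37p.symm) (by norm_num)
        have h1063 : (1063 : ℕ) ∣ N :=
          hoddN 1063 (by norm_num) (hkeyq a 1063 9 (hd9 a)
            (by rw [ha]; norm_num [Finset.sum_range_succ]))
        rcases hclass 1063 (by norm_num) h1063 with h1063p | ⟨d, hd⟩
        · exact absurd (h13p.trans h1063p.symm) (by norm_num)
        rcases hclass 757 (by norm_num) h757 with h757p | ⟨e, he⟩
        · exact absurd (h13p.trans h757p.symm) (by norm_num)
        exact finale a b c d e (hne ha hb (by norm_num)) (hne ha hc (by norm_num))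
          (hne ha hd (by norm_num)) (hne ha he (by norm_num))
          (hne hb hc (by norm_num)) (hne hb hd (by norm_num)) (hne hb he (by norm_num))
          (hne hc hd (by norm_num)) (hne hc he (by norm_num)) (hne hd he (by norm_num))
          (contrib a 7 ha (by norm_num [Finset.sum_range_succ]))
          (contrib b 19 hb (by norm_num [Finset.sum_range_succ]))
          (contrib c 37 hc (by norm_num [Finset.sum_range_succ]))
          (contrib d 1063 hd (by norm_num [Finset.sum_range_succ]))
          (contrib e 757 he (by norm_num [Finset.sum_range_succ]))
      · -- q a = 13
        have h61 : (61 : ℕ) ∣ N :=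
          hoddN 61 (by norm_num) (hkeyq a 61 9 (hd9 a)
            (by rw [ha]; norm_num [Finset.sum_range_succ]))
        rcases hclass 61 (by norm_num) h61 with h61p | ⟨b, hb⟩
        · -- 61 = p
          have h31 : (31 : ℕ) ∣ N :=
            hoddN 31 (by norm_num) (hkeyp 31 (by rw [← h61p]; norm_num))
          rcases hclass 31 (by norm_num) h31 with h31p | ⟨b, hb⟩
          · exact absurd (h61p.trans h31p.symm) (by norm_num)
          have h331 : (331 : ℕ) ∣ N :=
            hoddN 331 (by norm_num) (hkeyq b 331 9 (hd9 b)
              (by rw [hb]; norm_num [Finset.sum_range_succ]))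
          rcases hclass 331 (by norm_num) h331 with h331p | ⟨c, hc⟩
          · exact absurd (h61p.trans h331p.symm) (by norm_num)
          have h3637 : (3637 : ℕ) ∣ N :=
            hoddN 3637 (by norm_num) (hkeyq b 3637 9 (hd9 b)
              (by rw [hb]; norm_num [Finset.sum_range_succ]))
          rcases hclass 3637 (by norm_num) h3637 with h3637p | ⟨d, hd⟩
          · exact absurd (h61p.trans h3637p.symm) (by norm_num)
          rcases hclass 757 (by norm_num) h757 with h757p | ⟨e, he⟩
          · exact absurd (h61p.trans h757p.symm) (by norm_num)
          exact finale a b c d e (hne ha hb (by norm_num)) (hne ha hc (by norm_num))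
            (hne ha hd (by norm_num)) (hne ha he (by norm_num))
            (hne hb hc (by norm_num)) (hne hb hd (by norm_num)) (hne hb he (by norm_num))
            (hne hc hd (by norm_num)) (hne hc he (by norm_num)) (hne hd he (by norm_num))
            (contrib a 13 ha (by norm_num [Finset.sum_range_succ]))
            (contrib b 31 hb (by norm_num [Finset.sum_range_succ]))
            (contrib c 331 hc (by norm_num [Finset.sum_range_succ]))
            (contrib d 3637 hd (by norm_num [Finset.sum_range_succ]))
            (contrib e 757 he (by norm_num [Finset.sum_range_succ]))
        · -- q b = 61
          have h19 : (19 : ℕ) ∣ N :=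
            hoddN 19 (by norm_num) (hkeyq b 19 9 (hd9 b)
              (by rw [hb]; norm_num [Finset.sum_range_succ]))
          rcases hclass 19 (by norm_num) h19 with h19p | ⟨c, hc⟩
          · rw [← h19p] at hp4; norm_num at hp4
          have h127 : (127 : ℕ) ∣ N :=
            hoddN 127 (by norm_num) (hkeyq c 127 9 (hd9 c)
              (by rw [hc]; norm_num [Finset.sum_range_succ]))
          rcases hclass 127 (by norm_num) h127 with h127p | ⟨d, hd⟩
          · rw [← h127p] at hp4; norm_num at hp4
          have h523 : (523 : ℕ) ∣ N :=
            hoddN 523 (by norm_num) (hkeyq c 523 9 (hd9 c)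
              (by rw [hc]; norm_num [Finset.sum_range_succ]))
          rcases hclass 523 (by norm_num) h523 with h523p | ⟨e, he⟩
          · rw [← h523p] at hp4; norm_num at hp4
          exact finale a b c d e (hne ha hb (by norm_num)) (hne ha hc (by norm_num))
            (hne ha hd (by norm_num)) (hne ha he (by norm_num))
            (hne hb hc (by norm_num)) (hne hb hd (by norm_num)) (hne hb he (by norm_num))
            (hne hc hd (by norm_num)) (hne hc he (by norm_num)) (hne hd he (by norm_num))
            (contrib a 13 ha (by norm_num [Finset.sum_range_succ]))
            (contrib b 61 hb (by norm_num [Finset.sum_range_succ]))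
            (contrib c 19 hc (by norm_num [Finset.sum_range_succ]))
            (contrib d 127 hd (by norm_num [Finset.sum_range_succ]))
            (contrib e 523 he (by norm_num [Finset.sum_range_succ]))
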